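/- In the two-mode squeezing toy model, the entanglement entropy S(t) = ln(cosh(t)²) − sinh(t)²·ln(tanh(t)²) grows asymptotically linearly with slope 2: S(t)/t → 2 as t → +∞, i.e. Tendsto (fun t => S t / t) atTop (𝓝 2). -/

import Mathlib

open Filter Real

lemma aux_slope : Tendsto (fun u : ℝ => (Real.log (1 - u) - Real.log (1 + u)) / u)
    (nhdsWithin 0 (Set.Ioi 0)) (nhds (-2)) := by
  have hd1 : HasDerivAt (fun x : ℝ => Real.log (1 - x)) (-1) 0 := by
    have := (Real.hasDerivAt_log (by norm_num : (1:ℝ) - 0 ≠ 0)).comp 0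
      ((hasDerivAt_const 0 (1:ℝ)).sub (hasDerivAt_id 0))
    simpa [Function.comp_def] using this
  have hd2 : HasDerivAt (fun x : ℝ => Real.log (1 + x)) 1 0 := by
    have := (Real.hasDerivAt_log (by norm_num : (1:ℝ) + 0 ≠ 0)).comp 0
      ((hasDerivAt_const 0 (1:ℝ)).add (hasDerivAt_id 0))
    simpa [Function.comp_def] using this
  have hs := hasDerivAt_iff_tendsto_slope.mp (hd1.sub hd2)
  have hs' : Tendsto (slope (fun x : ℝ => Real.log (1 - x) - Real.log (1 + x)) 0)
      (nhdsWithin 0 (Set.Ioi 0)) (nhds (-2)) := by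
    have : (-1 - 1 : ℝ) = -2 := by norm_num
    exact this ▸ hs.mono_left (nhdsWithin_mono _ (fun x hx => ne_of_gt hx))
  refine hs'.congr fun u => ?_
  simp [slope_fun_def, div_eq_inv_mul]

lemma aux_exp_tendsto : Tendsto (fun t : ℝ => Real.exp (-(2*t))) atTop
    (nhdsWithin 0 (Set.Ioi 0)) := by
  apply tendsto_nhdsWithin_of_tendsto_nhds_of_eventually_within
  · refine Real.tendsto_exp_atBot.comp ?_
    exact tendsto_neg_atBot_iff.mpr (tendsto_id.const_mul_atTop (by norm_num : (0:ℝ) < 2))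
  · exact Eventually.of_forall fun t => Real.exp_pos _

lemma aux_B : Tendsto (fun t : ℝ => Real.sinh t ^ 2 * Real.log (Real.tanh t ^ 2))
    atTop (nhds (-1)) := by
  have hF : Tendsto (fun u : ℝ => (1 - u)^2 / 2 * ((Real.log (1 - u) - Real.log (1 + u)) / u))
      (nhdsWithin 0 (Set.Ioi 0)) (nhds (-1)) := by
    have h1 : Tendsto (fun u : ℝ => (1 - u)^2 / 2) (nhdsWithin 0 (Set.Ioi 0)) (nhds (1/2)) := by
      have : Tendsto (fun u : ℝ => (1 - u)^2 / 2) (nhds 0) (nhds ((1-0)^2/2)) :=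
        (((continuous_const.sub continuous_id).pow 2).div_const 2).tendsto 0
      simpa using this.mono_left nhdsWithin_le_nhds
    have := h1.mul aux_slope
    norm_num at this
    exact this
  have hcomp := hF.comp aux_exp_tendsto
  refine hcomp.congr' ?_
  filter_upwards [eventually_gt_atTop 0] with t ht
  set u := Real.exp (-(2*t)) with hu
  have hu0 : 0 < u := Real.exp_pos _
  have hu1 : u < 1 := by
    rw [hu]
    exact Real.exp_lt_one_iff.mpr (by linarith)
  have he : (0:ℝ) < Real.exp t := Real.exp_pos t
  have hue : u = ((Real.exp t)⁻¹)^2 := by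
    rw [hu, show -(2*t) = -t + -t by ring, Real.exp_add, Real.exp_neg]
    ring
  have hsinh : Real.sinh t ^ 2 = (1 - u)^2 / (4*u) := by
    rw [Real.sinh_eq, Real.exp_neg, hue]
    field_simp
    ring
  have htanh : Real.tanh t ^ 2 = ((1 - u)/(1 + u))^2 := by
    rw [Real.tanh_eq_sinh_div_cosh, Real.sinh_eq, Real.cosh_eq, Real.exp_neg, hue]
    have hne : Real.exp t + (Real.exp t)⁻¹ ≠ 0 := by positivity
    field_simp
  have hlog : Real.log (Real.tanh t ^ 2) = 2 * (Real.log (1 - u) - Real.log (1 + u)) := by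
    rw [htanh, Real.log_pow, Real.log_div (ne_of_gt (by linarith : (0:ℝ) < 1 - u)) (ne_of_gt (by linarith : (0:ℝ) < 1 + u))]
    push_cast
    ring
  show _ = _
  rw [hsinh, hlog]
  simp only [Function.comp]
  field_simp
  ring

lemma aux_A : Tendsto (fun t : ℝ => Real.log (Real.cosh t ^ 2) - 2*t) atTop
    (nhds (-(2 * Real.log 2))) := by
  have key : ∀ t : ℝ, Real.log (Real.cosh t ^ 2) - 2*t
      = 2 * Real.log ((1 + Real.exp (-(2*t)))/2) := by
    intro t
    have hc : (0:ℝ) < Real.cosh t := Real.cosh_pos t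
    have h1 : Real.cosh t * Real.exp (-t) = (1 + Real.exp (-(2*t)))/2 := by
      rw [Real.cosh_eq, div_mul_eq_mul_div, add_mul, ← Real.exp_add, ← Real.exp_add,
        show t + -t = 0 by ring, show -t + -t = -(2*t) by ring, Real.exp_zero]
    have h2 : Real.log (Real.cosh t * Real.exp (-t)) = Real.log (Real.cosh t) - t := by
      rw [Real.log_mul (ne_of_gt hc) (ne_of_gt (Real.exp_pos _)), Real.log_exp]
      ring
    rw [Real.log_pow, ← h1, h2]
    push_cast
    ring
  simp only [key]
  have : Tendsto (fun t : ℝ => Real.exp (-(2*t))) atTop (nhds 0) := by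
    refine Real.tendsto_exp_atBot.comp ?_
    exact tendsto_neg_atBot_iff.mpr (tendsto_id.const_mul_atTop (by norm_num : (0:ℝ) < 2))
  have hlog : Tendsto (fun t : ℝ => Real.log ((1 + Real.exp (-(2*t)))/2)) atTop
      (nhds (Real.log ((1+0)/2))) := by
    exact ((Real.continuousAt_log (by norm_num)).tendsto.comp
      (((tendsto_const_nhds.add this).div_const 2)))
  have h3 := hlog.const_mul 2
  have hval : 2 * Real.log ((1+(0:ℝ))/2) = -(2*Real.log 2) := by
    rw [show ((1:ℝ)+0)/2 = 2⁻¹ by norm_num, Real.log_inv]; ring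
  rw [hval] at h3
  exact h3

theorem two_mode_squeezing_entropy_linear_growth
    (S : ℝ → ℝ)
    (hS : ∀ t : ℝ, S t
      = Real.log (Real.cosh t ^ 2) - Real.sinh t ^ 2 * Real.log (Real.tanh t ^ 2)) :
    Tendsto (fun t : ℝ => S t / t) atTop (nhds 2) := by
  have hG : Tendsto (fun t : ℝ => S t - 2*t) atTop
      (nhds ((-(2*Real.log 2)) - (-1))) := by
    refine (aux_A.sub aux_B).congr fun t => ?_
    rw [hS t]; ring
  have hdiv : Tendsto (fun t : ℝ => (S t - 2*t)/t) atTop (nhds 0) :=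
    hG.div_atTop tendsto_id
  have h2 : Tendsto (fun t : ℝ => 2 + (S t - 2*t)/t) atTop (nhds 2) := by
    simpa using tendsto_const_nhds.add hdiv
  refine h2.congr' ?_
  filter_upwards [eventually_gt_atTop 0] with t ht
  field_simp
  ring
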